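/- Let φ be a smoothing kernel with associated set G and constant M_φ, let f ∈ C_{‖·‖} and χ > 0. Then S_χ[f] is convex, Lipschitz continuous with constant 1 w.r.t. ‖·‖, continuously differentiable, and its gradient is Lipschitz continuous with constant M_φ/χ: ‖∇S_χ[f](x) − ∇S_χ[f](y)‖_* ≤ χ⁻¹ M_φ ‖x−y‖ for all x, y ∈ E. -/

import Mathlib

open Set Pointwise

/-- `N` is a norm on the real vector space `E`. -/
structure IsNorm {E : Type*} [AddCommGroup E] [Module ℝ E] (N : E → ℝ) : Prop where
  nonneg : ∀ x, 0 ≤ N x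
  eq_zero_iff : ∀ x, N x = 0 ↔ x = 0
  smul : ∀ (c : ℝ) (x : E), N (c • x) = |c| * N x
  add_le : ∀ x y, N (x + y) ≤ N x + N y

/-- The norm dual to `N` (w.r.t. the inner ℝ product identification). -/
noncomputable def dualNorm {E : Type*} [NormedAddCommGroup E] [InnerProductSpace ℝ E]
    (N : E → ℝ) (ξ : E) : ℝ :=
  sSup ((fun x => (inner ℝ ξ x : ℝ)) '' {x : E | N x ≤ 1})

/-- `f` is Lipschitz continuous with constant 1 w.r.t. the norm `N`. -/
def LipWrt {E : Type*} [AddCommGroup E] [Module ℝ E] (N : E → ℝ) (f : E → ℝ) : Prop :=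
  ∀ x y, |f x - f y| ≤ N (x - y)

/-- Membership in the class `C_{‖·‖}`: convex and 1-Lipschitz w.r.t. `N`. -/
def MemC {E : Type*} [AddCommGroup E] [Module ℝ E] (N : E → ℝ) (f : E → ℝ) : Prop :=
  ConvexOn ℝ Set.univ f ∧ LipWrt N f

/-- A smoothing kernel: a twice continuously differentiable convex function `φ` on an open
convex set `dom`, with `φ(0) = 0`, `∇φ(0) = 0` (property A), together with a compact convex
set `G ⊆ dom` with `0 ∈ int G` and `φ > N` on `∂G` (property B). -/
structure SmoothingKernel (E : Type*) [NormedAddCommGroup E] [InnerProductSpace ℝ E]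
    [FiniteDimensional ℝ E] (N : E → ℝ) where
  dom : Set E
  φ : E → ℝ
  dom_open : IsOpen dom
  dom_convex : Convex ℝ dom
  φ_smooth : ContDiffOn ℝ 2 φ dom
  φ_convex : ConvexOn ℝ dom φ
  zero_mem_dom : (0 : E) ∈ dom
  φ_zero : φ 0 = 0
  grad_zero : gradient φ 0 = 0
  G : Set E
  G_sub_dom : G ⊆ dom
  G_compact : IsCompact G
  G_convex : Convex ℝ G
  zero_mem_int : (0 : E) ∈ interior G
  φ_gt_norm : ∀ x ∈ frontier G, N x < φ x

/-- Property C: bound `⟨e, ∇²φ(h) e⟩ ≤ M ‖e‖²` on the Hessian quadratic form on `G`. -/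
def HessBound {E : Type*} [NormedAddCommGroup E] [InnerProductSpace ℝ E]
    [FiniteDimensional ℝ E] {N : E → ℝ} (K : SmoothingKernel E N) (M : ℝ) : Prop :=
  ∀ h ∈ K.G, ∀ e : E, iteratedFDeriv ℝ 2 K.φ h ![e, e] ≤ M * N e ^ 2

/-- The scaled smoothing `S_χ[f](x) = min_{h ∈ χ·Dom φ} [f(x+h) + χ φ(h/χ)]`. -/
noncomputable def smoothingScaled {E : Type*} [NormedAddCommGroup E] [InnerProductSpace ℝ E]
    [FiniteDimensional ℝ E] {N : E → ℝ} (K : SmoothingKernel E N) (χ : ℝ) (f : E → ℝ)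
    (x : E) : ℝ :=
  sInf ((fun h => f (x + h) + χ * K.φ (χ⁻¹ • h)) '' (χ • K.dom))

variable {E : Type*} [NormedAddCommGroup E] [InnerProductSpace ℝ E]
  [FiniteDimensional ℝ E]


section AuxiliaryLemmas

variable {E : Type*} [NormedAddCommGroup E] [InnerProductSpace ℝ E] [FiniteDimensional ℝ E]
variable {N : E → ℝ}

theorem IsNorm.zero (hN : IsNorm N) : N 0 = 0 := (hN.eq_zero_iff 0).2 rfl


theorem IsNorm.sub_le (hN : IsNorm N) (x y : E) : N x - N y ≤ N (x - y) := by
  have := hN.add_le (x - y) y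
  simp only [sub_add_cancel] at this
  linarith

theorem IsNorm.neg (hN : IsNorm N) (x : E) : N (-x) = N x := by
  have := hN.smul (-1) x
  simpa using this

theorem IsNorm.sum_le (hN : IsNorm N) {ι : Type*} (s : Finset ι) (g : ι → E) :
    N (∑ i ∈ s, g i) ≤ ∑ i ∈ s, N (g i) := by
  classical
  induction s using Finset.cons_induction with
  | empty => simp [hN.zero]
  | cons a s ha ih =>
    rw [Finset.sum_cons, Finset.sum_cons]
    exact (hN.add_le _ _).trans (by linarith)

theorem IsNorm.exists_upper (hN : IsNorm N) : ∃ c : ℝ, 0 < c ∧ ∀ x, N x ≤ c * ‖x‖ := by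
  classical
  set b := Module.finBasis ℝ E with hb
  set n := Module.finrank ℝ E with hn
  refine ⟨∑ i : Fin n, (‖(b.coord i).toContinuousLinearMap‖ * N (b i)) + 1, ?_, ?_⟩
  · have : (0:ℝ) ≤ ∑ i : Fin n, (‖(b.coord i).toContinuousLinearMap‖ * N (b i)) :=
      Finset.sum_nonneg fun i _ => mul_nonneg (norm_nonneg _) (hN.nonneg _)
    linarith
  · intro x
    calc N x = N (∑ i : Fin n, b.repr x i • b i) := by rw [b.sum_repr x]
    _ ≤ ∑ i : Fin n, N (b.repr x i • b i) := hN.sum_le _ _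
    _ = ∑ i : Fin n, |b.repr x i| * N (b i) := by simp [hN.smul]
    _ ≤ ∑ i : Fin n, (‖(b.coord i).toContinuousLinearMap‖ * ‖x‖) * N (b i) := by
        refine Finset.sum_le_sum fun i _ => ?_
        refine mul_le_mul_of_nonneg_right ?_ (hN.nonneg _)
        have := (b.coord i).toContinuousLinearMap.le_opNorm x
        simpa using this.trans_eq' (by simp [Real.norm_eq_abs])
    _ = (∑ i : Fin n, ‖(b.coord i).toContinuousLinearMap‖ * N (b i)) * ‖x‖ := by
        rw [Finset.sum_mul]; congr 1; ext i; ring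
    _ ≤ (∑ i : Fin n, ‖(b.coord i).toContinuousLinearMap‖ * N (b i) + 1) * ‖x‖ := by
        refine mul_le_mul_of_nonneg_right (by linarith) (norm_nonneg _)

theorem IsNorm.lipschitz (hN : IsNorm N) {c : ℝ} (hc : ∀ x, N x ≤ c * ‖x‖) (x y : E) :
    |N x - N y| ≤ c * ‖x - y‖ := by
  rw [abs_sub_le_iff]
  constructor
  · exact (hN.sub_le x y).trans (hc _)
  · refine (hN.sub_le y x).trans ?_
    rw [← norm_neg]; simpa [neg_sub] using hc (y - x)

theorem IsNorm.continuous (hN : IsNorm N) : Continuous N := by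
  obtain ⟨c, hc0, hc⟩ := hN.exists_upper
  rw [Metric.continuous_iff]
  intro x ε hε
  exact ⟨ε / c, div_pos hε hc0, fun y hy => by
    have := hN.lipschitz hc y x
    have h2 : c * ‖y - x‖ < ε := by
      have : ‖y - x‖ < ε / c := by simpa [dist_eq_norm] using hy
      calc c * ‖y - x‖ < c * (ε / c) := by exact mul_lt_mul_of_pos_left this hc0
      _ = ε := by field_simp
    calc dist (N y) (N x) = |N y - N x| := Real.dist_eq _ _
    _ < ε := lt_of_le_of_lt this h2⟩

theorem IsNorm.exists_lower (hN : IsNorm N) : ∃ c : ℝ, 0 < c ∧ ∀ x, c * ‖x‖ ≤ N x := by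
  classical
  by_cases hE : Subsingleton E
  · exact ⟨1, one_pos, fun x => by
      have : x = 0 := Subsingleton.elim x 0
      simp [this, hN.zero]⟩
  · have : Nontrivial E := not_subsingleton_iff_nontrivial.mp hE
    have hsph : (Metric.sphere (0:E) 1).Nonempty := by
      obtain ⟨v, hv⟩ := exists_ne (0:E)
      exact ⟨(‖v‖)⁻¹ • v, by simp [norm_smul, inv_mul_cancel₀ (norm_ne_zero_iff.2 hv)]⟩
    have hcpt : IsCompact (Metric.sphere (0:E) 1) := isCompact_sphere 0 1
    obtain ⟨z, hz, hzmin⟩ := hcpt.exists_isMinOn hsph hN.continuous.continuousOn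
    have hz1 : ‖z‖ = 1 := by simpa using hz
    have hzne : z ≠ 0 := by intro h; rw [h] at hz1; simp at hz1
    have hNz : 0 < N z := by
      rcases lt_or_eq_of_le (hN.nonneg z) with h | h
      · exact h
      · exact absurd ((hN.eq_zero_iff z).1 h.symm) hzne
    refine ⟨N z, hNz, fun x => ?_⟩
    by_cases hx : x = 0
    · simp [hx, hN.zero]
    · have hxs : (‖x‖)⁻¹ • x ∈ Metric.sphere (0:E) 1 := by
        simp [norm_smul, inv_mul_cancel₀ (norm_ne_zero_iff.2 hx)]
      have := hzmin hxs
      have h2 : N z ≤ N ((‖x‖)⁻¹ • x) := this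
      rw [hN.smul] at h2
      have hxn : 0 < ‖x‖ := norm_pos_iff.2 hx
      rw [abs_of_pos (by positivity)] at h2
      calc N z * ‖x‖ ≤ (‖x‖⁻¹ * N x) * ‖x‖ := mul_le_mul_of_nonneg_right h2 hxn.le
      _ = N x := by field_simp



theorem IsNorm.unitBall_compact (hN : IsNorm N) : IsCompact {x : E | N x ≤ 1} := by
  obtain ⟨c, hc0, hc⟩ := hN.exists_lower
  have hclosed : IsClosed {x : E | N x ≤ 1} := isClosed_le hN.continuous continuous_const
  have hbdd : Bornology.IsBounded {x : E | N x ≤ 1} := by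
    rw [Metric.isBounded_iff_subset_closedBall 0]
    refine ⟨c⁻¹, fun x hx => ?_⟩
    simp only [Metric.mem_closedBall, dist_zero_right]
    have h1 := (hc x).trans hx
    rw [← le_div_iff₀' hc0] at h1
    simpa [div_eq_inv_mul, one_mul] using h1.trans_eq (one_div c ▸ rfl)
  exact Metric.isCompact_of_isClosed_isBounded hclosed hbdd

theorem dualNorm_set_nonempty (ξ : E) (hN : IsNorm N) :
    ((fun x => (inner ℝ ξ x : ℝ)) '' {x : E | N x ≤ 1}).Nonempty :=
  ⟨0, ⟨0, by simp [hN.zero], by simp⟩⟩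

theorem dualNorm_bddAbove (hN : IsNorm N) (ξ : E) :
    BddAbove ((fun x => (inner ℝ ξ x : ℝ)) '' {x : E | N x ≤ 1}) :=
  ((hN.unitBall_compact.image (continuous_const.inner continuous_id)).bddAbove)

theorem dualNorm_nonneg (hN : IsNorm N) (ξ : E) : 0 ≤ dualNorm N ξ :=
  le_csSup (dualNorm_bddAbove hN ξ) ⟨0, by simp [hN.zero], by simp⟩

theorem exists_dualNorm_attained (hN : IsNorm N) (ξ : E) :
    ∃ w : E, N w ≤ 1 ∧ (inner ℝ ξ w : ℝ) = dualNorm N ξ := by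
  have hcpt := hN.unitBall_compact.image
    (continuous_const.inner continuous_id : Continuous fun x : E => (inner ℝ ξ x : ℝ))
  have hne := dualNorm_set_nonempty ξ hN
  have := hcpt.sSup_mem hne
  obtain ⟨w, hw, hweq⟩ := this
  exact ⟨w, hw, hweq⟩

theorem inner_le_dualNorm (hN : IsNorm N) (ξ v : E) :
    (inner ℝ ξ v : ℝ) ≤ dualNorm N ξ * N v := by
  by_cases hv : v = 0
  · simp [hv, hN.zero]
  · have hNv : 0 < N v := by
      rcases lt_or_eq_of_le (hN.nonneg v) with h | h
      · exact h
      · exact absurd ((hN.eq_zero_iff v).1 h.symm) hv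
    have hmem : (N v)⁻¹ • v ∈ {x : E | N x ≤ 1} := by
      simp only [mem_setOf_eq, hN.smul, abs_of_pos (inv_pos.2 hNv)]
      rw [inv_mul_cancel₀ hNv.ne']
    have this2 : (inner ℝ ξ ((N v)⁻¹ • v) : ℝ) ≤ dualNorm N ξ :=
      le_csSup (dualNorm_bddAbove hN ξ) ⟨_, hmem, rfl⟩
    have h2 : (inner ℝ ξ ((N v)⁻¹ • v) : ℝ) = (N v)⁻¹ * inner ℝ ξ v := by
      rw [real_inner_smul_right]
    rw [h2] at this2
    have this := this2
    calc (inner ℝ ξ v : ℝ) = N v * ((N v)⁻¹ * inner ℝ ξ v) := by field_simp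
    _ ≤ N v * dualNorm N ξ := mul_le_mul_of_nonneg_left this hNv.le
    _ = dualNorm N ξ * N v := mul_comm _ _

theorem dualNorm_add_le (hN : IsNorm N) (ξ η : E) :
    dualNorm N (ξ + η) ≤ dualNorm N ξ + dualNorm N η := by
  refine csSup_le (dualNorm_set_nonempty _ hN) ?_
  rintro r ⟨x, hx, rfl⟩
  simp only [inner_add_left]
  have h1 := le_csSup (dualNorm_bddAbove hN ξ) ⟨x, hx, rfl⟩
  have h2 := le_csSup (dualNorm_bddAbove hN η) ⟨x, hx, rfl⟩
  exact add_le_add h1 h2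

theorem dualNorm_neg (hN : IsNorm N) (ξ : E) : dualNorm N (-ξ) = dualNorm N ξ := by
  have key : ∀ η : E, dualNorm N (-η) ≤ dualNorm N η := by
    intro η
    refine csSup_le (dualNorm_set_nonempty _ hN) ?_
    rintro r ⟨x, hx, rfl⟩
    have hmem : -x ∈ {x : E | N x ≤ 1} := by
      simpa [hN.smul, abs_of_pos, (by simpa using hN.smul (-1) x : N (-x) = N x)] using hx
    have := le_csSup (dualNorm_bddAbove hN η) ⟨-x, hmem, rfl⟩
    simpa [dualNorm, inner_neg_left, inner_neg_right] using this
  refine le_antisymm (key ξ) ?_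
  have := key (-ξ)
  simpa using this

theorem norm_le_dualNorm (hN : IsNorm N) {c : ℝ} (hc0 : 0 < c) (hc : ∀ x, N x ≤ c * ‖x‖)
    (ξ : E) : ‖ξ‖ ≤ c * dualNorm N ξ := by
  by_cases hξ : ξ = 0
  · have := dualNorm_nonneg hN (0:E)
    simp only [hξ, norm_zero]
    positivity
  · have hξn : 0 < ‖ξ‖ := norm_pos_iff.2 hξ
    have hmem : (c * ‖ξ‖)⁻¹ • ξ ∈ {x : E | N x ≤ 1} := by
      have hn : 0 < c * ‖ξ‖ := by positivity
      simp only [mem_setOf_eq, hN.smul, abs_of_pos (inv_pos.2 hn)]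
      calc (c * ‖ξ‖)⁻¹ * N ξ ≤ (c * ‖ξ‖)⁻¹ * (c * ‖ξ‖) :=
        mul_le_mul_of_nonneg_left (hc ξ) (inv_pos.2 hn).le
      _ = 1 := inv_mul_cancel₀ hn.ne'
    have this2 : (inner ℝ ξ ((c * ‖ξ‖)⁻¹ • ξ) : ℝ) ≤ dualNorm N ξ :=
      le_csSup (dualNorm_bddAbove hN ξ) ⟨_, hmem, rfl⟩
    have h2 : (inner ℝ ξ ((c * ‖ξ‖)⁻¹ • ξ) : ℝ) = (c * ‖ξ‖)⁻¹ * ‖ξ‖^2 := by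
      rw [real_inner_smul_right, real_inner_self_eq_norm_sq]
    rw [h2] at this2
    have hn : 0 < c * ‖ξ‖ := by positivity
    have h3 : (c * ‖ξ‖)⁻¹ * ‖ξ‖^2 = ‖ξ‖ / c := by
      field_simp
    rw [h3] at this2
    rw [div_le_iff₀ hc0] at this2
    linarith [this2]



theorem SmoothingKernel.zero_mem_G (K : SmoothingKernel E N) : (0:E) ∈ K.G :=
  interior_subset K.zero_mem_int

theorem SmoothingKernel.G_closed (K : SmoothingKernel E N) : IsClosed K.G :=
  K.G_compact.isClosed

theorem SmoothingKernel.diffAt (K : SmoothingKernel E N) {u : E} (hu : u ∈ K.dom) :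
    DifferentiableAt ℝ K.φ u :=
  ((K.φ_smooth.contDiffAt (K.dom_open.mem_nhds hu)).differentiableAt (by norm_num))

theorem SmoothingKernel.fderiv_zero (K : SmoothingKernel E N) : fderiv ℝ K.φ 0 = 0 := by
  have h := K.grad_zero
  unfold gradient at h
  have := congrArg (InnerProductSpace.toDual ℝ E) h
  rw [LinearIsometryEquiv.apply_symm_apply] at this
  rw [this]
  simp

theorem SmoothingKernel.inner_gradient (K : SmoothingKernel E N) (u e : E) :
    (inner ℝ (gradient K.φ u) e : ℝ) = fderiv ℝ K.φ u e := by
  unfold gradient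
  rw [← InnerProductSpace.toDual_apply_apply, LinearIsometryEquiv.apply_symm_apply]

theorem SmoothingKernel.contOn (K : SmoothingKernel E N) : ContinuousOn K.φ K.dom :=
  (K.φ_smooth.continuousOn)

theorem SmoothingKernel.φ_nonneg (K : SmoothingKernel E N) {u : E} (hu : u ∈ K.dom) :
    0 ≤ K.φ u := by
  -- slope: φ(t u) ≤ t φ(u) for t ∈ (0,1]; derivative of t ↦ φ(t u) at 0 is 0
  have hline : HasDerivAt (fun t : ℝ => K.φ (t • u)) (fderiv ℝ K.φ 0 u) 0 := by
    have h1 : HasDerivAt (fun t : ℝ => t • u) u 0 := by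
      simpa using (hasDerivAt_id (0:ℝ)).smul_const u
    have h2 := (K.diffAt K.zero_mem_dom).hasFDerivAt
    have h2' : HasFDerivAt K.φ (fderiv ℝ K.φ 0) ((fun t : ℝ => t • u) 0) := by
      simpa using h2
    have := h2'.comp_hasDerivAt 0 h1
    simpa [Function.comp_def] using this
  rw [K.fderiv_zero] at hline
  simp only [ContinuousLinearMap.zero_apply] at hline
  -- slope inequality
  have hslope : ∀ t : ℝ, t ∈ Ioo (0:ℝ) 1 → K.φ (t • u) ≤ t * K.φ u := by
    intro t ht
    have := K.φ_convex.2 hu K.zero_mem_dom (le_of_lt ht.1) (by linarith [ht.2] : (0:ℝ) ≤ 1 - t)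
      (by ring)
    simpa [K.φ_zero, smul_zero, add_zero] using this
  have htend : Filter.Tendsto (slope (fun t : ℝ => K.φ (t • u)) 0) (nhdsWithin 0 (Ioi 0)) (nhds 0) := by
    have h := hasDerivAt_iff_tendsto_slope.1 hline
    exact h.mono_left (nhdsWithin_mono 0 (fun t ht => (ne_of_gt ht)))
  refine le_of_tendsto htend ?_
  filter_upwards [Ioo_mem_nhdsGT_of_mem (by constructor <;> norm_num : (0:ℝ) ∈ Ico 0 1)] with t ht
  have hs := hslope t ht
  rw [slope_def_field]
  simp only [zero_smul, K.φ_zero, sub_zero]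
  rw [div_le_iff₀ ht.1]
  linarith [hs]

theorem SmoothingKernel.gt_norm_outside (K : SmoothingKernel E N) (hN : IsNorm N)
    {u : E} (hu : u ∈ K.dom) (huG : u ∉ K.G) : N u < K.φ u := by
  have hu0 : u ≠ 0 := fun h => huG (h ▸ K.zero_mem_G)
  have hun : 0 < ‖u‖ := norm_pos_iff.2 hu0
  set s : Set ℝ := {t : ℝ | t ∈ Icc (0:ℝ) 1 ∧ t • u ∈ K.G} with hs
  have hs_closed : IsClosed s := by
    refine IsClosed.inter isClosed_Icc ?_
    exact K.G_closed.preimage (continuous_id.smul continuous_const)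
  have hs_ne : s.Nonempty := ⟨0, ⟨le_refl 0, zero_le_one⟩, by simpa using K.zero_mem_G⟩
  have hs_bdd : BddAbove s := ⟨1, fun t ht => ht.1.2⟩
  set t₀ := sSup s with ht₀
  have ht₀s : t₀ ∈ s := hs_closed.csSup_mem hs_ne hs_bdd
  have ht₀1 : t₀ ≤ 1 := ht₀s.1.2
  have ht₀0 : 0 ≤ t₀ := ht₀s.1.1
  have ht₀lt1 : t₀ < 1 := by
    rcases lt_or_eq_of_le ht₀1 with h | h
    · exact h
    · exfalso; apply huG; have := ht₀s.2; rw [h] at this; simpa using this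
  have ht₀pos : 0 < t₀ := by
    obtain ⟨ε, hε, hball⟩ := Metric.isOpen_iff.1 isOpen_interior 0 K.zero_mem_int
    set t := min 1 (ε / (2 * ‖u‖)) with htdef
    have htpos : 0 < t := lt_min one_pos (by positivity)
    have htle : t ≤ t₀ := by
      apply le_csSup hs_bdd
      refine ⟨⟨htpos.le, min_le_left _ _⟩, ?_⟩
      apply interior_subset
      apply hball
      simp only [Metric.mem_ball, dist_zero_right, norm_smul, Real.norm_eq_abs,
        abs_of_pos htpos]
      calc t * ‖u‖ ≤ (ε / (2 * ‖u‖)) * ‖u‖ :=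
        mul_le_mul_of_nonneg_right (min_le_right _ _) (norm_nonneg _)
      _ = ε / 2 := by field_simp
      _ < ε := by linarith
    linarith
  have hfront : t₀ • u ∈ frontier K.G := by
    rw [frontier, K.G_closed.closure_eq]
    refine ⟨ht₀s.2, ?_⟩
    intro hint
    obtain ⟨δ, hδ, hball⟩ := Metric.isOpen_iff.1 isOpen_interior _ hint
    set t' := min 1 (t₀ + δ / (2 * ‖u‖)) with ht'def
    have hδu : 0 < δ / (2 * ‖u‖) := by positivity
    have ht'gt : t₀ < t' := lt_min ht₀lt1 (by linarith)
    have ht'mem : t' ∈ s := by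
      refine ⟨⟨by positivity, min_le_left _ _⟩, ?_⟩
      apply interior_subset
      apply hball
      simp only [Metric.mem_ball]
      rw [dist_eq_norm, ← sub_smul, norm_smul, Real.norm_eq_abs,
        abs_of_nonneg (by linarith [ht'gt] : (0:ℝ) ≤ t' - t₀)]
      calc (t' - t₀) * ‖u‖ ≤ (δ / (2 * ‖u‖)) * ‖u‖ := by
            refine mul_le_mul_of_nonneg_right ?_ (norm_nonneg _)
            have := min_le_right 1 (t₀ + δ / (2 * ‖u‖))
            linarith [this]
      _ = δ / 2 := by field_simp
      _ < δ := by linarith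
    have := le_csSup hs_bdd ht'mem
    linarith
  have hkey := K.φ_gt_norm _ hfront
  have hconv := K.φ_convex.2 hu K.zero_mem_dom ht₀pos.le (by linarith : (0:ℝ) ≤ 1 - t₀) (by ring)
  simp only [smul_zero, add_zero, K.φ_zero, mul_zero] at hconv
  rw [hN.smul] at hkey
  rw [abs_of_pos ht₀pos] at hkey
  have : t₀ * N u < t₀ * K.φ u := lt_of_lt_of_le hkey hconv
  exact lt_of_mul_lt_mul_left this ht₀pos.le

theorem SmoothingKernel.descent (K : SmoothingKernel E N) {M : ℝ}
    (hM : ∀ h ∈ K.G, ∀ e : E, iteratedFDeriv ℝ 2 K.φ h ![e, e] ≤ M * N e ^ 2)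
    {u e : E} (hu : u ∈ K.G) (hue : u + e ∈ K.G) :
    K.φ (u + e) ≤ K.φ u + fderiv ℝ K.φ u e + M / 2 * N e ^ 2 := by
  set B := M * N e ^ 2 with hB
  have hseg : ∀ t ∈ Icc (0:ℝ) 1, u + t • e ∈ K.G := by
    intro t ht
    have := K.G_convex hu hue (by linarith [ht.2] : (0:ℝ) ≤ 1 - t) ht.1 (by ring)
    convert this using 1
    module
  have hdomseg : ∀ t ∈ Icc (0:ℝ) 1, u + t • e ∈ K.dom := fun t ht => K.G_sub_dom (hseg t ht)
  set g : ℝ → ℝ := fun t => K.φ (u + t • e) with hgdef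
  set d : ℝ → ℝ := fun t => fderiv ℝ K.φ (u + t • e) e with hddef
  have hline : ∀ t : ℝ, HasDerivAt (fun s : ℝ => u + s • e) e t := by
    intro t
    simpa using ((hasDerivAt_id t).smul_const e).const_add u
  have hg : ∀ t ∈ Icc (0:ℝ) 1, HasDerivAt g (d t) t := by
    intro t ht
    have h2 : HasFDerivAt K.φ (fderiv ℝ K.φ (u + t • e)) ((fun s : ℝ => u + s • e) t) :=
      (K.diffAt (hdomseg t ht)).hasFDerivAt
    simpa [Function.comp_def, hgdef, hddef] using h2.comp_hasDerivAt t (hline t)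
  have hF : ∀ t ∈ Icc (0:ℝ) 1,
      HasDerivAt d (fderiv ℝ (fderiv ℝ K.φ) (u + t • e) e e) t := by
    intro t ht
    have hctd : ContDiffAt ℝ 2 K.φ (u + t • e) :=
      K.φ_smooth.contDiffAt (K.dom_open.mem_nhds (hdomseg t ht))
    have hdF : DifferentiableAt ℝ (fderiv ℝ K.φ) (u + t • e) :=
      (hctd.fderiv_right (m := 1) (by norm_num)).differentiableAt (by norm_num)
    have h1 : HasFDerivAt (fderiv ℝ K.φ) (fderiv ℝ (fderiv ℝ K.φ) (u + t • e))
        ((fun s : ℝ => u + s • e) t) := hdF.hasFDerivAt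
    have h2 := h1.comp_hasDerivAt t (hline t)
    have h3 := ((ContinuousLinearMap.apply ℝ ℝ e).hasFDerivAt).comp_hasDerivAt t h2
    simpa [Function.comp_def, hddef] using h3
  have hbound : ∀ t ∈ Icc (0:ℝ) 1, fderiv ℝ (fderiv ℝ K.φ) (u + t • e) e e ≤ B := by
    intro t ht
    have := hM _ (hseg t ht) e
    rwa [iteratedFDeriv_two_apply] at this
    -- may need to massage ![e,e]
  -- step 1 : d t ≤ d 0 + B * t on Icc 0 1
  have hstep1 : ∀ t ∈ Icc (0:ℝ) 1, d t ≤ d 0 + B * t := by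
    intro t ht
    set q : ℝ → ℝ := fun s => d s - B * s with hq
    have hq' : ∀ s ∈ Icc (0:ℝ) 1, HasDerivAt q (fderiv ℝ (fderiv ℝ K.φ) (u + s • e) e e - B) s := by
      intro s hs
      have hid : HasDerivAt (fun y : ℝ => B * y) B s := by
        simpa using (hasDerivAt_id s).const_mul B
      exact (hF s hs).sub hid
    have hanti : AntitoneOn q (Icc 0 1) := by
      apply antitoneOn_of_deriv_nonpos (convex_Icc 0 1)
      · exact fun s hs => ((hq' s hs).continuousAt).continuousWithinAt
      · intro s hs
        rw [interior_Icc] at hs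
        exact ((hq' s (Ioo_subset_Icc_self hs)).differentiableAt).differentiableWithinAt
      · intro s hs
        rw [interior_Icc] at hs
        rw [(hq' s (Ioo_subset_Icc_self hs)).deriv]
        have := hbound s (Ioo_subset_Icc_self hs)
        linarith
    have := hanti (left_mem_Icc.2 zero_le_one) ht ht.1
    simp only [hq, mul_zero, sub_zero] at this
    linarith
  -- step 2
  set h : ℝ → ℝ := fun t => g t - d 0 * t - B / 2 * t ^ 2 with hh
  have hh' : ∀ s ∈ Icc (0:ℝ) 1, HasDerivAt h (d s - d 0 - B * s) s := by
    intro s hs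
    have hid : HasDerivAt (fun y : ℝ => d 0 * y) (d 0) s := by
      simpa using (hasDerivAt_id s).const_mul (d 0)
    have h1 := (hg s hs).sub hid
    have h2 : HasDerivAt (fun t : ℝ => B / 2 * t ^ 2) (B * s) s := by
      have h3 := ((hasDerivAt_pow 2 s)).const_mul (B / 2)
      simp only [Nat.cast_ofNat, pow_one] at h3
      rw [show B * s = B / 2 * (2 * s ^ (2 - 1)) by norm_num; ring]
      exact h3
    have h4 := h1.sub h2
    exact h4
  have hanti2 : AntitoneOn h (Icc 0 1) := by
    apply antitoneOn_of_deriv_nonpos (convex_Icc 0 1)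
    · exact fun s hs => ((hh' s hs).continuousAt).continuousWithinAt
    · intro s hs
      rw [interior_Icc] at hs
      exact ((hh' s (Ioo_subset_Icc_self hs)).differentiableAt).differentiableWithinAt
    · intro s hs
      rw [interior_Icc] at hs
      rw [(hh' s (Ioo_subset_Icc_self hs)).deriv]
      have := hstep1 s (Ioo_subset_Icc_self hs)
      linarith
  have hfin := hanti2 (left_mem_Icc.2 zero_le_one) (right_mem_Icc.2 zero_le_one) zero_le_one
  simp only [hh, hgdef, one_smul, zero_smul, add_zero, mul_zero, mul_one, one_pow, sub_zero,
    zero_pow, mul_zero] at hfin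
  have hd0 : d 0 = fderiv ℝ K.φ u e := by simp [hddef]
  rw [hd0] at hfin
  linarith [hfin]

theorem SmoothingKernel.M_pos (K : SmoothingKernel E N) (hN : IsNorm N) {M : ℝ}
    (hM : ∀ h ∈ K.G, ∀ e : E, iteratedFDeriv ℝ 2 K.φ h ![e, e] ≤ M * N e ^ 2)
    [Nontrivial E] : 0 < M := by
  -- frontier of G is nonempty
  have hGne : K.G ≠ univ := by
    intro h
    obtain ⟨C, hC⟩ := (isBounded_iff_forall_norm_le).1 K.G_compact.isBounded
    obtain ⟨v, hv⟩ := exists_ne (0:E)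
    have hvn : 0 < ‖v‖ := norm_pos_iff.2 hv
    have := hC (((C+1)/‖v‖ + 1) • v) (h ▸ mem_univ _)
    rw [norm_smul, Real.norm_eq_abs] at this
    have hC0 : 0 ≤ C := le_trans (norm_nonneg _) (hC 0 (h ▸ mem_univ _))
    have habs : |(C+1)/‖v‖ + 1| = (C+1)/‖v‖ + 1 := abs_of_pos (by positivity)
    rw [habs] at this
    nlinarith [div_mul_cancel₀ (C+1) hvn.ne']
  obtain ⟨u₀, hu₀⟩ := (nonempty_frontier_iff).2 ⟨⟨0, K.zero_mem_G⟩, hGne⟩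
  have hu₀G : u₀ ∈ K.G := by
    rw [frontier, K.G_closed.closure_eq] at hu₀
    exact hu₀.1
  have hu₀ne : u₀ ≠ 0 := by
    intro h
    rw [frontier, K.G_closed.closure_eq] at hu₀
    exact hu₀.2 (h ▸ K.zero_mem_int)
  have hNu₀ : 0 < N u₀ := by
    rcases lt_or_eq_of_le (hN.nonneg u₀) with h | h
    · exact h
    · exact absurd ((hN.eq_zero_iff u₀).1 h.symm) hu₀ne
  have hdesc := K.descent hM K.zero_mem_G (by simpa using hu₀G)
  simp only [zero_add, K.φ_zero, K.fderiv_zero, ContinuousLinearMap.zero_apply] at hdesc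
  have hgt := K.φ_gt_norm u₀ hu₀
  nlinarith [sq_nonneg (N u₀)]

/-- The set of possible minimizers. -/
def SmoothingKernel.A (K : SmoothingKernel E N) (N' : E → ℝ) : Set E :=
  {u ∈ K.G | K.φ u ≤ N' u}

theorem SmoothingKernel.A_compact (K : SmoothingKernel E N) (hN : IsNorm N)
    (hNcont : Continuous N) : IsCompact (K.A N) := by
  refine K.G_compact.of_isClosed_subset ?_ (fun u hu => hu.1)
  have heq : K.A N = K.G ∩ (fun u => K.φ u - N u) ⁻¹' Iic 0 := by
    ext u; simp [SmoothingKernel.A, sub_nonpos]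
  rw [heq]
  have hcont : ContinuousOn (fun u => K.φ u - N u) K.G :=
    (K.contOn.mono K.G_sub_dom).sub hNcont.continuousOn
  exact hcont.preimage_isClosed_of_isClosed K.G_closed isClosed_Iic

theorem SmoothingKernel.A_sub_interior (K : SmoothingKernel E N) : K.A N ⊆ interior K.G := by
  intro u hu
  by_contra hint
  have hfront : u ∈ frontier K.G := by
    rw [frontier, K.G_closed.closure_eq]
    exact ⟨hu.1, hint⟩
  exact absurd hu.2 (not_le.2 (K.φ_gt_norm u hfront))


theorem dualNorm_zero' {E : Type*} [NormedAddCommGroup E] [InnerProductSpace ℝ E]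
    [FiniteDimensional ℝ E] {N : E → ℝ} (hN : IsNorm N) : dualNorm N (0 : E) = 0 := by
  refine le_antisymm ?_ (dualNorm_nonneg hN 0)
  refine csSup_le (dualNorm_set_nonempty _ hN) ?_
  rintro r ⟨x, hx, rfl⟩
  simp


theorem LipWrt.continuous {f : E → ℝ} (hN : IsNorm N) (hf : LipWrt N f) : Continuous f := by
  obtain ⟨c, hc0, hc⟩ := hN.exists_upper
  rw [Metric.continuous_iff]
  intro x ε hε
  refine ⟨ε / c, div_pos hε hc0, fun y hy => ?_⟩
  have h1 := (hf y x).trans (hc (y - x))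
  rw [Real.dist_eq]
  have h2 : ‖y - x‖ < ε / c := by simpa [dist_eq_norm] using hy
  calc |f y - f x| ≤ c * ‖y - x‖ := h1
  _ < c * (ε / c) := by exact mul_lt_mul_of_pos_left h2 hc0
  _ = ε := by field_simp

theorem exists_minimizer (hN : IsNorm N) (K : SmoothingKernel E N) (f : E → ℝ)
    (hf : MemC N f) {χ : ℝ} (hχ : 0 < χ) (x : E) :
    ∃ u₀ ∈ K.A N, smoothingScaled K χ f x = f (x + χ • u₀) + χ * K.φ u₀ ∧
      ∀ h ∈ χ • K.dom, f (x + χ • u₀) + χ * K.φ u₀ ≤ f (x + h) + χ * K.φ (χ⁻¹ • h) := by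
  have hfc : Continuous f := hf.2.continuous hN
  set g : E → ℝ := fun u => f (x + χ • u) + χ * K.φ u with hg
  have hgcont : ContinuousOn g K.G := by
    refine ContinuousOn.add ?_ (continuousOn_const.mul (K.contOn.mono K.G_sub_dom))
    exact (hfc.comp (continuous_const.add (continuous_const.smul continuous_id))).continuousOn
  obtain ⟨u₀, hu₀G, hu₀min⟩ := K.G_compact.exists_isMinOn ⟨0, K.zero_mem_G⟩ hgcont
  have hg0 : g 0 = f x := by simp [hg, K.φ_zero]
  have hu₀le : g u₀ ≤ f x := hg0 ▸ hu₀min K.zero_mem_G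
  have hu₀A : u₀ ∈ K.A N := by
    refine ⟨hu₀G, ?_⟩
    have h1 : χ * K.φ u₀ ≤ f x - f (x + χ • u₀) := by
      simp only [hg] at hu₀le; linarith
    have h2 : f x - f (x + χ • u₀) ≤ N (χ • u₀) := by
      have := hf.2 x (x + χ • u₀)
      rw [abs_sub_le_iff] at this
      have h3 := this.1
      have h4 : x - (x + χ • u₀) = -(χ • u₀) := by abel
      rw [h4, hN.neg] at h3
      linarith
    rw [hN.smul, abs_of_pos hχ] at h2
    have := h1.trans h2
    exact le_of_mul_le_mul_left (by linarith) hχ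
  -- key lower bound over all of χ • dom
  have hkey : ∀ h ∈ χ • K.dom, g u₀ ≤ f (x + h) + χ * K.φ (χ⁻¹ • h) := by
    intro h hh
    obtain ⟨v, hv, rfl⟩ := hh
    have hveq : χ⁻¹ • (χ • v) = v := inv_smul_smul₀ hχ.ne' v
    rw [hveq]
    by_cases hvG : v ∈ K.G
    · exact hu₀min hvG
    · have hgt := K.gt_norm_outside hN hv hvG
      have hflb : f x - N (χ • v) ≤ f (x + χ • v) := by
        have := hf.2 x (x + χ • v)
        rw [abs_sub_le_iff] at this
        have h3 := this.1
        have h4 : x - (x + χ • v) = -(χ • v) := by abel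
        rw [h4, hN.neg] at h3
        linarith
      rw [hN.smul, abs_of_pos hχ] at hflb
      calc g u₀ ≤ f x := hu₀le
      _ ≤ f (x + χ • v) + χ * N v := by linarith
      _ ≤ f (x + χ • v) + χ * K.φ v := by nlinarith [hgt]
  have hmem : χ • u₀ ∈ χ • K.dom := smul_mem_smul_set (K.G_sub_dom hu₀G)
  have hSeq : smoothingScaled K χ f x = g u₀ := by
    refine le_antisymm ?_ ?_
    · refine csInf_le ⟨g u₀, ?_⟩ ⟨χ • u₀, hmem, ?_⟩
      · rintro r ⟨h, hh, rfl⟩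
        exact hkey h hh
      · simp only [hg]
        rw [inv_smul_smul₀ hχ.ne']
    · refine le_csInf ⟨_, ⟨χ • u₀, hmem, rfl⟩⟩ ?_
      rintro r ⟨h, hh, rfl⟩
      exact hkey h hh
  refine ⟨u₀, hu₀A, ?_, ?_⟩
  · rw [hSeq]
  · intro h hh
    have := hkey h hh
    simpa [hg] using this

end AuxiliaryLemmas

set_option maxHeartbeats 2000000 in
/-- the scaled smoothing `S_χ[f]` is convex, 1-Lipschitz w.r.t. `N`,
continuously differentiable, and its gradient is Lipschitz continuous with constant `M_φ/χ`:
`‖∇S_χ[f](x) − ∇S_χ[f](y)‖_* ≤ χ⁻¹ M_φ ‖x − y‖` for all `x, y`. -/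
theorem smoothingScaled_smoothness
    {N : E → ℝ} (hN : IsNorm N) (K : SmoothingKernel E N) (M : ℝ) (hM : HessBound K M)
    (f : E → ℝ) (hf : MemC N f) (χ : ℝ) (hχ : 0 < χ) :
    ConvexOn ℝ Set.univ (smoothingScaled K χ f) ∧
    LipWrt N (smoothingScaled K χ f) ∧
    ContDiff ℝ 1 (smoothingScaled K χ f) ∧
    ∀ x y : E, dualNorm N (gradient (smoothingScaled K χ f) x
        - gradient (smoothingScaled K χ f) y) ≤ χ⁻¹ * M * N (x - y) := by
  classical
  by_cases hE : Subsingleton E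
  · -- trivial space
    have hall : ∀ x : E, x = 0 := fun x => Subsingleton.elim x 0
    have hSconst : smoothingScaled K χ f = fun _ => smoothingScaled K χ f 0 := by
      funext x; rw [hall x]
    refine ⟨?_, ?_, ?_, ?_⟩
    · rw [hSconst]; exact convexOn_const _ convex_univ
    · intro x y
      rw [hall x, hall y]
      simp [hN.zero]
    · rw [hSconst]; exact contDiff_const
    · intro x y
      rw [hall x, hall y]
      simp only [sub_self]
      rw [dualNorm_zero' hN, hN.zero]
      simp
  · have hNT : Nontrivial E := not_subsingleton_iff_nontrivial.mp hE
    obtain ⟨c₂, hc₂0, hc₂⟩ := hN.exists_upper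
    obtain ⟨c₁, hc₁0, hc₁⟩ := hN.exists_lower
    have hM0 : 0 < M := K.M_pos hN hM
    choose u huA huEq huMin using exists_minimizer hN K f hf hχ
    set S : E → ℝ := smoothingScaled K χ f with hSdef
    set p : E → E := fun x => - gradient K.φ (u x) with hp
    have huG : ∀ x, u x ∈ K.G := fun x => (huA x).1
    have hudom : ∀ x, u x ∈ K.dom := fun x => K.G_sub_dom (huG x)
    -- Part 1 : convexity
    have hconv : ConvexOn ℝ Set.univ S := by
      refine ⟨convex_univ, fun x _ y _ a b ha hb hab => ?_⟩
      set w := a • u x + b • u y with hw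
      have hwdom : w ∈ K.dom := K.dom_convex (hudom x) (hudom y) ha hb hab
      have hwmem : χ • w ∈ χ • K.dom := smul_mem_smul_set hwdom
      have h1 := (huEq (a • x + b • y)) ▸ huMin (a • x + b • y) (χ • w) hwmem
      rw [inv_smul_smul₀ hχ.ne'] at h1
      have hpt : a • x + b • y + χ • w = a • (x + χ • u x) + b • (y + χ • u y) := by
        rw [hw]; module
      rw [hpt] at h1
      have hfc := hf.1.2 (mem_univ (x + χ • u x)) (mem_univ (y + χ • u y)) ha hb hab
      have hφc := K.φ_convex.2 (hudom x) (hudom y) ha hb hab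
      simp only [smul_eq_mul] at hfc hφc
      have hφc' : χ * K.φ w ≤ χ * (a * K.φ (u x) + b * K.φ (u y)) := by
        rw [hw]
        exact mul_le_mul_of_nonneg_left hφc hχ.le
      have hx' := huEq x
      have hy' := huEq y
      have : S (a • x + b • y) ≤ a * f (x + χ • u x) + b * f (y + χ • u y)
          + χ * (a * K.φ (u x) + b * K.φ (u y)) := by
        calc S (a • x + b • y) ≤ f (a • (x + χ • u x) + b • (y + χ • u y)) + χ * K.φ w := h1
        _ ≤ a * f (x + χ • u x) + b * f (y + χ • u y) + χ * (a * K.φ (u x) + b * K.φ (u y)) := by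
            have := hfc; have := hφc'; linarith
      calc S (a • x + b • y) ≤ a * f (x + χ • u x) + b * f (y + χ • u y)
          + χ * (a * K.φ (u x) + b * K.φ (u y)) := this
      _ = a * (f (x + χ • u x) + χ * K.φ (u x)) + b * (f (y + χ • u y) + χ * K.φ (u y)) := by ring
      _ = a * S x + b * S y := by rw [← hx', ← hy']
    -- Part 2 : Lipschitz
    have hlip1 : ∀ x y : E, S x - S y ≤ N (x - y) := by
      intro x y
      have hmem : χ • u y ∈ χ • K.dom := smul_mem_smul_set (hudom y)
      have h1 := (huEq x) ▸ huMin x (χ • u y) hmem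
      rw [inv_smul_smul₀ hχ.ne'] at h1
      have h2 : f (x + χ • u y) - f (y + χ • u y) ≤ N (x - y) := by
        have := hf.2 (x + χ • u y) (y + χ • u y)
        rw [abs_sub_le_iff] at this
        have h3 := this.1
        have h4 : x + χ • u y - (y + χ • u y) = x - y := by abel
        rwa [h4] at h3
      have h5 := huEq y
      linarith
    have hlip : LipWrt N S := by
      intro x y
      rw [abs_sub_le_iff]
      refine ⟨hlip1 x y, ?_⟩
      have := hlip1 y x
      have h4 : y - x = -(x - y) := by abel
      rwa [h4, hN.neg] at this
    -- thickening radius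
    obtain ⟨r, hr0, hrsub⟩ := (K.A_compact hN hN.continuous).exists_thickening_subset_open
      isOpen_interior K.A_sub_interior
    have hstep : ∀ (x : E) (w : E), ‖w‖ < r → u x + w ∈ K.G := by
      intro x w hw
      refine interior_subset (hrsub ?_)
      rw [Metric.mem_thickening_iff]
      exact ⟨u x, huA x, by simpa [dist_eq_norm] using hw⟩
    set C := M / (2 * χ) with hC
    have hC0 : 0 < C := by positivity
    set T := χ * r / 2 with hT
    have hT0 : 0 < T := by positivity
    -- (G2) : upper estimate
    have hG2 : ∀ (x w : E), ‖w‖ ≤ T → S (x + w) ≤ S x + inner ℝ (p x) w + C * N w ^ 2 := by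
      intro x w hwle
      set e := -(χ⁻¹ • w) with he
      have hee : ‖e‖ < r := by
        rw [he, norm_neg, norm_smul, Real.norm_eq_abs, abs_of_pos (inv_pos.2 hχ)]
        calc χ⁻¹ * ‖w‖ ≤ χ⁻¹ * T := mul_le_mul_of_nonneg_left hwle (inv_pos.2 hχ).le
        _ = r / 2 := by rw [hT]; field_simp
        _ < r := by linarith
      have hin : u x + e ∈ K.G := hstep x e hee
      have hdesc := K.descent hM (huG x) hin
      have hmem : χ • (u x + e) ∈ χ • K.dom := smul_mem_smul_set (K.G_sub_dom hin)
      have h1 := (huEq (x + w)) ▸ huMin (x + w) (χ • (u x + e)) hmem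
      rw [inv_smul_smul₀ hχ.ne'] at h1
      have hpt : x + w + χ • (u x + e) = x + χ • u x := by
        rw [he]; rw [smul_add, smul_neg, smul_inv_smul₀ hχ.ne']; abel
      rw [hpt] at h1
      have hNe : N e ^ 2 = χ⁻¹ ^ 2 * N w ^ 2 := by
        rw [he, hN.neg, hN.smul, abs_of_pos (inv_pos.2 hχ)]; ring
      have hfder : fderiv ℝ K.φ (u x) e = - (χ⁻¹ * (inner ℝ (gradient K.φ (u x)) w : ℝ)) := by
        rw [K.inner_gradient, he]
        rw [map_neg, map_smul]
        simp
      have hip : (inner ℝ (p x) w : ℝ) = - (inner ℝ (gradient K.φ (u x)) w : ℝ) := by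
        rw [hp]; simp [inner_neg_left]
      have hcalc : χ * K.φ (u x + e) ≤ χ * K.φ (u x) + inner ℝ (p x) w + C * N w ^ 2 := by
        have h2 : χ * K.φ (u x + e) ≤ χ * (K.φ (u x) + fderiv ℝ K.φ (u x) e + M / 2 * N e ^ 2) :=
          mul_le_mul_of_nonneg_left hdesc hχ.le
        rw [hfder, hNe] at h2
        rw [hip]
        have hrw : χ * (K.φ (u x) + -(χ⁻¹ * (inner ℝ (gradient K.φ (u x)) w : ℝ))
            + M / 2 * (χ⁻¹ ^ 2 * N w ^ 2))
            = χ * K.φ (u x) + -(inner ℝ (gradient K.φ (u x)) w : ℝ) + C * N w ^ 2 := by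
          rw [hC]; field_simp; try ring
        rw [hrw] at h2
        exact h2
      have hEq := huEq x
      calc S (x + w) ≤ f (x + χ • u x) + χ * K.φ (u x + e) := h1
      _ ≤ f (x + χ • u x) + χ * K.φ (u x) + inner ℝ (p x) w + C * N w ^ 2 := by linarith
      _ = S x + inner ℝ (p x) w + C * N w ^ 2 := by rw [hEq]; try ring
    -- (G1) : global subgradient inequality
    have hG1 : ∀ (x v : E), S x + inner ℝ (p x) v ≤ S (x + v) := by
      intro x v
      by_cases hv : v = 0
      · simp [hv]
      · have hvn : 0 < ‖v‖ := norm_pos_iff.2 hv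
        have key : ∀ ε, 0 < ε → S x + inner ℝ (p x) v ≤ S (x + v) + ε := by
          intro ε hε
          set t := min (min 1 (T / ‖v‖)) (ε / (C * N v ^ 2 + 1)) with ht
          have ht0 : 0 < t := by
            refine lt_min (lt_min one_pos (by positivity)) ?_
            have : 0 < C * N v ^ 2 + 1 := by positivity
            positivity
          have ht1 : t ≤ 1 := le_trans (min_le_left _ _) (min_le_left _ _)
          have htT : t * ‖v‖ ≤ T := by
            have h1 : t ≤ T / ‖v‖ := le_trans (min_le_left _ _) (min_le_right _ _)
            calc t * ‖v‖ ≤ (T / ‖v‖) * ‖v‖ := mul_le_mul_of_nonneg_right h1 hvn.le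
            _ = T := by field_simp
          have htε : t * (C * N v ^ 2) ≤ ε := by
            have h1 : t ≤ ε / (C * N v ^ 2 + 1) := min_le_right _ _
            have h2 : 0 < C * N v ^ 2 + 1 := by positivity
            calc t * (C * N v ^ 2) ≤ (ε / (C * N v ^ 2 + 1)) * (C * N v ^ 2 + 1) := by
                  refine mul_le_mul h1 (by linarith) (by positivity) (by positivity)
            _ = ε := by field_simp
          -- lower bound for S (x + t v)
          have hup : S (x + -(t • v)) ≤ S x + inner ℝ (p x) (-(t • v)) + C * N (-(t • v)) ^ 2 := by
            refine hG2 x (-(t • v)) ?_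
            rw [norm_neg, norm_smul, Real.norm_eq_abs, abs_of_pos ht0]
            exact htT
          have hmid : S x ≤ (S (x + t • v) + S (x + -(t • v))) / 2 := by
            have := hconv.2 (mem_univ (x + t • v)) (mem_univ (x + -(t • v)))
              (by norm_num : (0:ℝ) ≤ 1/2) (by norm_num : (0:ℝ) ≤ 1/2) (by norm_num)
            have hpt : (1/2 : ℝ) • (x + t • v) + (1/2 : ℝ) • (x + -(t • v)) = x := by module
            rw [hpt] at this
            simp only [smul_eq_mul] at this
            linarith
          have hlow : S x + t * inner ℝ (p x) v - C * t ^ 2 * N v ^ 2 ≤ S (x + t • v) := by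
            have h1 : (inner ℝ (p x) (-(t • v)) : ℝ) = - (t * inner ℝ (p x) v) := by
              rw [inner_neg_right, real_inner_smul_right]
            have h2 : N (-(t • v)) ^ 2 = t ^ 2 * N v ^ 2 := by
              rw [hN.neg, hN.smul, abs_of_pos ht0]; ring
            rw [h1, h2] at hup
            linarith
          -- slope
          have hslope : S (x + t • v) ≤ (1 - t) * S x + t * S (x + v) := by
            have := hconv.2 (mem_univ (x + v)) (mem_univ x) ht0.le
              (by linarith : (0:ℝ) ≤ 1 - t) (by ring)
            have hpt : t • (x + v) + (1 - t) • x = x + t • v := by module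
            rw [hpt] at this
            simp only [smul_eq_mul] at this
            linarith
          have hcomb : t * inner ℝ (p x) v - C * t ^ 2 * N v ^ 2 ≤ t * (S (x + v) - S x) := by
            nlinarith [hlow, hslope]
          have hfin : inner ℝ (p x) v - C * t * N v ^ 2 ≤ S (x + v) - S x := by
            have := hcomb
            have h3 : t * (inner ℝ (p x) v - C * t * N v ^ 2) ≤ t * (S (x + v) - S x) := by
              nlinarith [this]
            exact le_of_mul_le_mul_left (by linarith [h3]) ht0
          have : C * t * N v ^ 2 ≤ ε := by
            calc C * t * N v ^ 2 = t * (C * N v ^ 2) := by ring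
            _ ≤ ε := htε
          linarith
        exact le_of_forall_pos_le_add key
    -- local gradient Lipschitz bound
    set δ := c₁ * T with hδ
    have hδ0 : 0 < δ := by positivity
    have hplocal : ∀ x y : E, N (x - y) ≤ δ → dualNorm N (p x - p y) ≤ 2 * C * N (x - y) := by
      intro x y hxy
      set q := p x - p y with hq
      obtain ⟨w₀, hw₀N, hw₀eq⟩ := exists_dualNorm_attained hN q
      set D := dualNorm N q with hD
      have hD0 : 0 ≤ D := dualNorm_nonneg hN q
      have hw₀norm : ‖w₀‖ ≤ 1 / c₁ := by
        have := (hc₁ w₀).trans hw₀N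
        rw [le_div_iff₀ hc₁0]
        linarith [this]
      have hineq : ∀ t : ℝ, 0 ≤ t → t ≤ δ → 2 * t * D ≤ D * N (x - y) + 2 * C * t ^ 2 := by
        intro t ht0 htδ
        have hwnorm : ∀ s : E, s = t • w₀ ∨ s = -(t • w₀) → ‖s‖ ≤ T := by
          rintro s (rfl | rfl)
          · rw [norm_smul, Real.norm_eq_abs, abs_of_nonneg ht0]
            calc t * ‖w₀‖ ≤ δ * (1 / c₁) := by
                  refine mul_le_mul htδ hw₀norm (norm_nonneg _) hδ0.le
            _ = T := by rw [hδ]; field_simp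
          · rw [norm_neg, norm_smul, Real.norm_eq_abs, abs_of_nonneg ht0]
            calc t * ‖w₀‖ ≤ δ * (1 / c₁) := by
                  refine mul_le_mul htδ hw₀norm (norm_nonneg _) hδ0.le
            _ = T := by rw [hδ]; field_simp
        have hNt : ∀ s : E, s = t • w₀ ∨ s = -(t • w₀) → N s ≤ t := by
          rintro s (rfl | rfl)
          · rw [hN.smul, abs_of_nonneg ht0]
            nlinarith [hw₀N, hN.nonneg w₀]
          · rw [hN.neg, hN.smul, abs_of_nonneg ht0]
            nlinarith [hw₀N, hN.nonneg w₀]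
        -- (*) : with w = -(t w₀) at x
        have hstar : S y + inner ℝ (p y) (x - y) + t * D ≤ S x + C * t ^ 2 := by
          set w : E := -(t • w₀) with hwdef
          have h2 := hG2 x w (hwnorm w (Or.inr rfl))
          have h1 := hG1 y (x + w - y)
          have hpt : y + (x + w - y) = x + w := by abel
          rw [hpt] at h1
          have hNw : N w ≤ t := hNt w (Or.inr rfl)
          have hNw2 : N w ^ 2 ≤ t ^ 2 := by nlinarith [hN.nonneg w]
          have hinner : (inner ℝ (p y) (x + w - y) : ℝ)
              = inner ℝ (p y) (x - y) + inner ℝ (p y) w := by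
            have : x + w - y = (x - y) + w := by abel
            rw [this, inner_add_right]
          rw [hinner] at h1
          have hqw : (inner ℝ (p x) w : ℝ) - inner ℝ (p y) w = - (t * D) := by
            have : (inner ℝ (p x) w : ℝ) - inner ℝ (p y) w = inner ℝ q w := by
              rw [hq, inner_sub_left]
            rw [this, hwdef, inner_neg_right, real_inner_smul_right, hw₀eq]
          nlinarith [h1, h2, hqw, mul_le_mul_of_nonneg_left hNw2 hC0.le]
        -- (**) : with w' = t w₀ at y
        have hstar2 : S x + inner ℝ (p x) (y - x) + t * D ≤ S y + C * t ^ 2 := by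
          set w : E := t • w₀ with hwdef
          have h2 := hG2 y w (hwnorm w (Or.inl rfl))
          have h1 := hG1 x (y + w - x)
          have hpt : x + (y + w - x) = y + w := by abel
          rw [hpt] at h1
          have hNw : N w ≤ t := hNt w (Or.inl rfl)
          have hNw2 : N w ^ 2 ≤ t ^ 2 := by nlinarith [hN.nonneg w]
          have hinner : (inner ℝ (p x) (y + w - x) : ℝ)
              = inner ℝ (p x) (y - x) + inner ℝ (p x) w := by
            have : y + w - x = (y - x) + w := by abel
            rw [this, inner_add_right]
          rw [hinner] at h1
          have hqw : (inner ℝ (p x) w : ℝ) - inner ℝ (p y) w = t * D := by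
            have : (inner ℝ (p x) w : ℝ) - inner ℝ (p y) w = inner ℝ q w := by
              rw [hq, inner_sub_left]
            rw [this, hwdef, real_inner_smul_right, hw₀eq]
          nlinarith [h1, h2, hqw, mul_le_mul_of_nonneg_left hNw2 hC0.le]
        have hsum : (inner ℝ (p y) (x - y) : ℝ) + inner ℝ (p x) (y - x) + 2 * t * D
            ≤ 2 * C * t ^ 2 := by linarith [hstar, hstar2]
        have hqd : (inner ℝ q (x - y) : ℝ)
            = - ((inner ℝ (p y) (x - y) : ℝ) + inner ℝ (p x) (y - x)) := by
          rw [hq, inner_sub_left]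
          have : y - x = -(x - y) := by abel
          rw [this, inner_neg_right]
          ring
        have hcs : (inner ℝ q (x - y) : ℝ) ≤ D * N (x - y) := inner_le_dualNorm hN q (x - y)
        rw [hqd] at hcs
        linarith [hsum, hcs]
      -- choose optimal t
      by_cases hDz : D = 0
      · rw [hDz]
        exact mul_nonneg (by positivity) (hN.nonneg _)
      · have hDpos : 0 < D := lt_of_le_of_ne hD0 (Ne.symm hDz)
        by_cases hcase : D / (2 * C) ≤ δ
        · have := hineq (D / (2 * C)) (by positivity) hcase
          have h2C : 0 < 2 * C := by positivity
          have hdd : D / (2 * C) * (2 * C) = D := by field_simp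
          nlinarith [this, hdd]
        · exfalso
          push_neg at hcase
          rw [lt_div_iff₀ (by positivity : (0:ℝ) < 2 * C)] at hcase
          have := hineq δ hδ0.le le_rfl
          nlinarith [this, hxy, hδ0, hDpos, hcase, mul_le_mul_of_nonneg_left hxy hD0]
    -- global gradient Lipschitz bound
    have hplip : ∀ x y : E, dualNorm N (p x - p y) ≤ 2 * C * N (x - y) := by
      have hind : ∀ n : ℕ, ∀ x y : E, N (x - y) ≤ n * δ →
          dualNorm N (p x - p y) ≤ 2 * C * N (x - y) := by
        intro n
        induction n with
        | zero =>
          intro x y hxy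
          have hxy0 : N (x - y) = 0 := le_antisymm (by simpa using hxy) (hN.nonneg _)
          have : x = y := by
            have := (hN.eq_zero_iff (x - y)).1 hxy0
            rwa [sub_eq_zero] at this
          rw [this]
          simp only [sub_self]
          rw [dualNorm_zero' hN]
          exact mul_nonneg (by positivity) (hN.nonneg _)
        | succ n ih =>
          intro x y hxy
          by_cases hn : N (x - y) ≤ n * δ
          · exact ih x y hn
          · push_neg at hn
            set z := x + ((n : ℝ)/(n+1)) • (y - x) with hz
            have hn1 : (0:ℝ) < n + 1 := by positivity
            have hxz : x - z = ((n : ℝ)/(n+1)) • (x - y) := by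
              rw [hz]; module
            have hzy : z - y = (1/((n:ℝ)+1)) • (x - y) := by
              have hs : (1:ℝ)/((n:ℝ)+1) = 1 - (n:ℝ)/((n:ℝ)+1) := by field_simp; ring
              rw [hs, hz]; module
            have hNxz : N (x - z) = (n / ((n:ℝ)+1)) * N (x - y) := by
              rw [hxz, hN.smul, abs_of_nonneg (by positivity)]
            have hNzy : N (z - y) = (1 / ((n:ℝ)+1)) * N (x - y) := by
              rw [hzy, hN.smul, abs_of_nonneg (by positivity)]
            have h1 : N (x - z) ≤ n * δ := by
              rw [hNxz]
              calc (n / ((n:ℝ)+1)) * N (x - y) ≤ (n / ((n:ℝ)+1)) * ((n+1) * δ) := by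
                    refine mul_le_mul_of_nonneg_left ?_ (by positivity)
                    simpa [Nat.cast_succ] using hxy
              _ = n * δ := by field_simp
            have h2 : N (z - y) ≤ δ := by
              rw [hNzy]
              calc (1 / ((n:ℝ)+1)) * N (x - y) ≤ (1 / ((n:ℝ)+1)) * ((n+1) * δ) := by
                    refine mul_le_mul_of_nonneg_left ?_ (by positivity)
                    simpa [Nat.cast_succ] using hxy
              _ = δ := by field_simp
            have ha := ih x z h1
            have hb := hplocal z y h2
            have htri : dualNorm N (p x - p y)
                ≤ dualNorm N (p x - p z) + dualNorm N (p z - p y) := by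
              have : p x - p y = (p x - p z) + (p z - p y) := by abel
              rw [this]
              exact dualNorm_add_le hN _ _
            calc dualNorm N (p x - p y) ≤ dualNorm N (p x - p z) + dualNorm N (p z - p y) := htri
            _ ≤ 2 * C * N (x - z) + 2 * C * N (z - y) := add_le_add ha hb
            _ = 2 * C * N (x - y) := by
                rw [hNxz, hNzy]; field_simp
      intro x y
      obtain ⟨n, hn⟩ := exists_nat_ge (N (x - y) / δ)
      refine hind n x y ?_
      rw [div_le_iff₀ hδ0] at hn
      linarith
    -- differentiability
    have hdiff : ∀ x : E, HasFDerivAt S ((InnerProductSpace.toDual ℝ E) (p x)) x := by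
      intro x
      rw [hasFDerivAt_iff_isLittleO_nhds_zero]
      rw [Asymptotics.isLittleO_iff]
      intro c hc
      have hrad : 0 < min T (c / (C * c₂ ^ 2 + 1)) := by
        refine lt_min hT0 ?_
        have : 0 < C * c₂ ^ 2 + 1 := by positivity
        positivity
      rw [Metric.eventually_nhds_iff]
      refine ⟨min T (c / (C * c₂ ^ 2 + 1)), hrad, fun h hh => ?_⟩
      rw [dist_zero_right] at hh
      have hhT : ‖h‖ ≤ T := le_of_lt (lt_of_lt_of_le hh (min_le_left _ _))
      have hlow := hG1 x h
      have hup := hG2 x h hhT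
      have htd : ((InnerProductSpace.toDual ℝ E) (p x)) h = (inner ℝ (p x) h : ℝ) := by
        simp [InnerProductSpace.toDual_apply_apply]
      have hNh : N h ^ 2 ≤ c₂ ^ 2 * ‖h‖ ^ 2 := by
        have := hc₂ h
        nlinarith [hN.nonneg h, norm_nonneg h]
      have hbound : |S (x + h) - S x - (inner ℝ (p x) h : ℝ)| ≤ C * c₂ ^ 2 * ‖h‖ ^ 2 := by
        rw [abs_of_nonneg (by linarith [hlow])]
        have := mul_le_mul_of_nonneg_left hNh hC0.le
        nlinarith [hup]
      rw [Real.norm_eq_abs, htd]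
      calc |S (x + h) - S x - (inner ℝ (p x) h : ℝ)| ≤ C * c₂ ^ 2 * ‖h‖ ^ 2 := hbound
      _ = (C * c₂ ^ 2 * ‖h‖) * ‖h‖ := by ring
      _ ≤ c * ‖h‖ := by
          refine mul_le_mul_of_nonneg_right ?_ (norm_nonneg _)
          have h1 : ‖h‖ ≤ c / (C * c₂ ^ 2 + 1) := le_of_lt (lt_of_lt_of_le hh (min_le_right _ _))
          have h2 : 0 < C * c₂ ^ 2 + 1 := by positivity
          calc C * c₂ ^ 2 * ‖h‖ ≤ (C * c₂ ^ 2 + 1) * (c / (C * c₂ ^ 2 + 1)) := by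
                refine mul_le_mul (by linarith) h1 (norm_nonneg _) (by positivity)
          _ = c := by field_simp
      _ = c * ‖id h‖ := by simp [Real.norm_eq_abs]
    have hgrad : ∀ x : E, gradient S x = p x := by
      intro x
      unfold gradient
      rw [(hdiff x).fderiv]
      exact (InnerProductSpace.toDual ℝ E).symm_apply_apply (p x)
    refine ⟨hconv, hlip, ?_, ?_⟩
    · rw [contDiff_one_iff_fderiv]
      refine ⟨fun x => (hdiff x).differentiableAt, ?_⟩
      have hfde : fderiv ℝ S = fun x => (InnerProductSpace.toDual ℝ E) (p x) := by
        funext x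
        exact (hdiff x).fderiv
      rw [hfde]
      -- p is continuous
      have hpcont : Continuous p := by
        rw [Metric.continuous_iff]
        intro x ε hε
        have hlipbound : ∀ a b : E, ‖p a - p b‖ ≤ c₂ * (2 * C) * (c₂ * ‖a - b‖) := by
          intro a b
          calc ‖p a - p b‖ ≤ c₂ * dualNorm N (p a - p b) :=
            norm_le_dualNorm hN hc₂0 hc₂ (p a - p b)
          _ ≤ c₂ * (2 * C * N (a - b)) := by
              refine mul_le_mul_of_nonneg_left (hplip a b) hc₂0.le
          _ ≤ c₂ * (2 * C * (c₂ * ‖a - b‖)) := by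
              refine mul_le_mul_of_nonneg_left ?_ hc₂0.le
              exact mul_le_mul_of_nonneg_left (hc₂ (a - b)) (by positivity)
          _ = c₂ * (2 * C) * (c₂ * ‖a - b‖) := by ring
        set L := c₂ * (2 * C) * c₂ + 1 with hL
        have hL0 : 0 < L := by positivity
        refine ⟨ε / L, by positivity, fun y hy => ?_⟩
        rw [dist_eq_norm] at hy ⊢
        calc ‖p y - p x‖ ≤ c₂ * (2 * C) * (c₂ * ‖y - x‖) := hlipbound y x
        _ = (c₂ * (2 * C) * c₂) * ‖y - x‖ := by ring
        _ ≤ (c₂ * (2 * C) * c₂) * (ε / L) := by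
            refine mul_le_mul_of_nonneg_left hy.le (by positivity)
        _ < ε := by
            rw [hL]
            rw [div_eq_inv_mul]
            have hq : (c₂ * (2 * C) * c₂) < L := by rw [hL]; linarith
            calc (c₂ * (2 * C) * c₂) * (L⁻¹ * ε) < L * (L⁻¹ * ε) := by
                  refine mul_lt_mul_of_pos_right hq ?_
                  positivity
            _ = ε := by field_simp
      exact ((InnerProductSpace.toDual ℝ E).continuous).comp hpcont
    · intro x y
      rw [hgrad x, hgrad y]
      have := hplip x y
      have h2C : 2 * C = χ⁻¹ * M := by rw [hC]; field_simp
      rwa [h2C] at this
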